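/- For the axially symmetric discrete Euler top (I2 = I3), a point (x1,x2,x3) with (x2,x3) ≠ (0,0) has exact period 4 if and only if x1 = ±2I2/(I2-I1) (equivalently x1² = (2I2/(I2-I1))², so μ4 = 1). -/

import Mathlib

/-- The axially symmetric discrete Euler map. -/
noncomputable def axialEulerMap (I1 I2 : ℝ) (p : ℝ × ℝ × ℝ) : ℝ × ℝ × ℝ :=
  let c : ℝ := (4*I2^2 - (I2 - I1)^2*p.1^2) / (4*I2^2 + (I2 - I1)^2*p.1^2)
  let s : ℝ := 4*I2*(I2 - I1)*p.1 / (4*I2^2 + (I2 - I1)^2*p.1^2)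
  (p.1, p.2.1 * c + p.2.2 * s, p.2.2 * c - p.2.1 * s)

set_option maxHeartbeats 1600000 in
/-- exact period 4 iff `x1 = ± 2 I2 / (I2 - I1)`. -/
theorem axial_euler_top_period_four
    (I1 I2 : ℝ) (hI1 : I1 ≠ 0) (hI2 : I2 ≠ 0) (h12 : I1 ≠ I2)
    (x1 x2 x3 : ℝ) (hx : (x2, x3) ≠ (0, 0)) :
    Function.minimalPeriod (axialEulerMap I1 I2) (x1, x2, x3) = 4
      ↔ (x1 = 2 * I2 / (I2 - I1) ∨ x1 = -(2 * I2 / (I2 - I1))) := by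
  have h21 : I2 - I1 ≠ 0 := sub_ne_zero.mpr (Ne.symm h12)
  have hx23 : ¬ (x2 = 0 ∧ x3 = 0) := by
    intro ⟨h2, h3⟩; exact hx (by rw [h2, h3])
  set D : ℝ := 4*I2^2 + (I2 - I1)^2*x1^2 with hD
  have hDpos : 0 < D := by positivity
  have hDne : D ≠ 0 := ne_of_gt hDpos
  set c : ℝ := (4*I2^2 - (I2 - I1)^2*x1^2) / D with hc
  set s : ℝ := 4*I2*(I2 - I1)*x1 / D with hs
  have hcs : c^2 + s^2 = 1 := by
    rw [hc, hs, div_pow, div_pow, ← add_div, div_eq_one_iff_eq (by positivity)]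
    rw [hD]; ring
  set f := axialEulerMap I1 I2 with hf
  set p : ℝ × ℝ × ℝ := (x1, x2, x3) with hp
  have step : ∀ u v : ℝ, f (x1, u, v) = (x1, u*c + v*s, v*c - u*s) := by
    intro u v
    simp only [hf, axialEulerMap, hc, hs, hD]
  clear_value D c s f p
  have it2 : f^[2] p = (x1, x2*(c^2-s^2) + x3*(2*c*s), x3*(c^2-s^2) - x2*(2*c*s)) := by
    simp only [hp, Function.iterate_succ, Function.iterate_zero, Function.comp_apply,
      id_eq, step]
    refine Prod.ext rfl (Prod.ext ?_ ?_) <;> simp <;> ring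
  have it4 : f^[4] p = (x1, x2*(c^4-6*c^2*s^2+s^4) + x3*(4*c^3*s-4*c*s^3),
      x3*(c^4-6*c^2*s^2+s^4) - x2*(4*c^3*s-4*c*s^3)) := by
    simp only [hp, Function.iterate_succ, Function.iterate_zero, Function.comp_apply,
      id_eq, step]
    refine Prod.ext rfl (Prod.ext ?_ ?_) <;> simp <;> ring
  constructor
  · -- minimal period 4 → x1 = ±
    intro hm
    have hper4 : Function.IsPeriodicPt f 4 p := by
      have := Function.isPeriodicPt_minimalPeriod f p
      rwa [hm] at this
    have hnot2 : ¬ Function.IsPeriodicPt f 2 p := by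
      intro h2
      have := h2.minimalPeriod_le (by norm_num)
      omega
    have heq := hper4
    rw [Function.IsPeriodicPt, Function.IsFixedPt, it4, hp, Prod.ext_iff, Prod.ext_iff] at heq
    obtain ⟨-, e1, e2⟩ := heq
    simp only at e1 e2
    -- derive C = 1, S = 0
    have hx2 : x2^2 + x3^2 ≠ 0 := by
      intro h
      exact hx23 ⟨by nlinarith [sq_nonneg x2, sq_nonneg x3], by nlinarith [sq_nonneg x2, sq_nonneg x3]⟩
    have hC : c^4-6*c^2*s^2+s^4 = 1 := by
      have key : (x2^2 + x3^2) * ((c^4-6*c^2*s^2+s^4) - 1) = 0 := by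
        linear_combination x2 * e1 + x3 * e2
      rcases mul_eq_zero.mp key with h | h
      · exact absurd h hx2
      · linarith
    have hS : 4*c^3*s-4*c*s^3 = 0 := by
      have key : (x2^2 + x3^2) * (4*c^3*s-4*c*s^3) = 0 := by
        linear_combination x3 * e1 - x2 * e2
      rcases mul_eq_zero.mp key with h | h
      · exact absurd h hx2
      · exact h
    have hcs0 : c = 0 ∨ s = 0 := by
      have h8 : c^2 * s^2 = 0 := by nlinarith [hcs, hC]
      rcases mul_eq_zero.mp h8 with h | h
      · exact Or.inl (pow_eq_zero_iff (two_ne_zero) |>.mp h)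
      · exact Or.inr (pow_eq_zero_iff (two_ne_zero) |>.mp h)
    rcases hcs0 with hc0 | hs0
    · -- c = 0 : the desired conclusion
      have hnum : 4*I2^2 - (I2 - I1)^2*x1^2 = 0 := by
        have := hc0
        rw [hc, div_eq_zero_iff] at this
        tauto
      have hfac : ((I2 - I1)*x1 - 2*I2) * ((I2 - I1)*x1 + 2*I2) = 0 := by nlinarith [hnum]
      rcases mul_eq_zero.mp hfac with h | h
      · left; field_simp; linarith
      · right; field_simp; linarith
    · -- s = 0 : contradiction with minimal period 4
      exfalso
      have hc2 : c^2 = 1 := by nlinarith [hcs]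
      apply hnot2
      rw [Function.IsPeriodicPt, Function.IsFixedPt, it2, hs0, hp]
      refine Prod.ext rfl (Prod.ext ?_ ?_) <;> simp
      · linear_combination x2 * hc2
      · linear_combination x3 * hc2
  · -- x1 = ± → minimal period 4
    intro hx1
    have hnum : 4*I2^2 - (I2 - I1)^2*x1^2 = 0 := by
      rcases hx1 with h | h <;> rw [h] <;> field_simp <;> ring
    have hc0 : c = 0 := by rw [hc, hnum, zero_div]
    have hs2 : s^2 = 1 := by nlinarith [hcs]
    have hper4 : Function.IsPeriodicPt f 4 p := by
      rw [Function.IsPeriodicPt, Function.IsFixedPt, it4, hc0, hp]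
      refine Prod.ext rfl (Prod.ext ?_ ?_) <;> simp
      · linear_combination x2 * (s^2 + 1) * hs2
      · linear_combination x3 * (s^2 + 1) * hs2
    have hnot2 : ¬ Function.IsPeriodicPt f 2 p := by
      intro h2
      rw [Function.IsPeriodicPt, Function.IsFixedPt, it2, hc0, hp, Prod.ext_iff, Prod.ext_iff] at h2
      obtain ⟨-, e1, e2⟩ := h2
      simp only at e1 e2
      apply hx23
      constructor <;> nlinarith [hs2, e1, e2]
    have hnot1 : ¬ Function.IsPeriodicPt f 1 p := by
      intro h1
      exact hnot2 (h1.trans_dvd (by norm_num))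
    have hdvd : Function.minimalPeriod f p ∣ 4 := hper4.minimalPeriod_dvd
    have hpos : 0 < Function.minimalPeriod f p :=
      hper4.minimalPeriod_pos (by norm_num)
    have hle : Function.minimalPeriod f p ≤ 4 := Nat.le_of_dvd (by norm_num) hdvd
    interval_cases hmv : (Function.minimalPeriod f p)
    · exfalso
      exact hnot1 (hmv ▸ Function.isPeriodicPt_minimalPeriod f p)
    · exfalso
      exact hnot2 (hmv ▸ Function.isPeriodicPt_minimalPeriod f p)
    · exfalso; norm_num at hdvd
    · rfl
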